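/- Let λ > 1. Then there is no point (x₁, x₂) ∈ ℝ² with x₁² + x₂² = 3 such that max{‖q·x₁‖, ‖q·x₂‖} < q^{−λ} holds for infinitely many positive integers q. In other words, the set of simultaneously q^{−λ}-well approximable points in ℝ² has empty intersection with the circle x₁² + x₂² = 3. -/
import Mathlib

noncomputable def distNearestInt (y : ℝ) : ℝ := |y - round y|

lemma zmod3sq : ∀ x y : ZMod 3, x^2 + y^2 = 0 → x = 0 ∧ y = 0 := by decide

lemma descent3 : ∀ n : ℕ, ∀ a b : ℤ, a^2 + b^2 = 3 * (n:ℤ)^2 → n = 0 := by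
  intro n
  induction n using Nat.strong_induction_on with
  | _ n ih =>
    intro a b h
    rcases Nat.eq_zero_or_pos n with h0 | hpos
    · exact h0
    exfalso
    have h30 : (3 : ZMod 3) = 0 := by decide
    have h3 : ((a : ZMod 3))^2 + ((b : ZMod 3))^2 = 0 := by
      have := congrArg (fun z : ℤ => (z : ZMod 3)) h
      push_cast at this
      rw [h30] at this
      simpa using this
    obtain ⟨ha, hb⟩ := zmod3sq _ _ h3
    obtain ⟨a', rfl⟩ := (ZMod.intCast_zmod_eq_zero_iff_dvd a 3).mp ha
    obtain ⟨b', rfl⟩ := (ZMod.intCast_zmod_eq_zero_iff_dvd b 3).mp hb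
    have h2 : 3 * (a'^2 + b'^2) = (n:ℤ)^2 := by
      push_cast at h
      have h9 : 3*(3 * (a'^2 + b'^2)) = 3*((n:ℤ)^2) := by linear_combination h
      exact mul_left_cancel₀ (by norm_num) h9
    have h3n : (3:ℤ) ∣ (n:ℤ) := Int.prime_three.dvd_of_dvd_pow (n := 2) ⟨_, h2.symm⟩
    obtain ⟨m, rfl⟩ := (Int.natCast_dvd_natCast (m := 3) (n := n)).mp (by exact_mod_cast h3n)
    have hm : a'^2 + b'^2 = 3 * (m:ℤ)^2 := by
      push_cast at h2
      have h9 : 3*(a'^2 + b'^2) = 3*(3 * (m:ℤ)^2) := by linear_combination h2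
      exact mul_left_cancel₀ (by norm_num) h9
    have hmn : m < 3 * m := by omega
    have := ih m hmn a' b' hm
    omega

theorem stmt16 (lam : ℝ) (hlam : 1 < lam) :
    ¬ ∃ x₁ x₂ : ℝ, x₁ ^ 2 + x₂ ^ 2 = 3 ∧
      {q : ℕ | 0 < q ∧ distNearestInt ((q : ℝ) * x₁) < (q : ℝ) ^ (-lam) ∧
        distNearestInt ((q : ℝ) * x₂) < (q : ℝ) ^ (-lam)}.Infinite := by
  rintro ⟨x₁, x₂, hx, hinf⟩
  -- |xᵢ| ≤ 2
  have hx1 : |x₁| ≤ 2 := by nlinarith [sq_abs x₁, sq_abs x₂, sq_nonneg x₂, abs_nonneg x₁]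
  have hx2 : |x₂| ≤ 2 := by nlinarith [sq_abs x₁, sq_abs x₂, sq_nonneg x₁, abs_nonneg x₂]
  -- find a large q in the set
  have htend : Filter.Tendsto (fun q : ℕ => (q:ℝ)^(lam-1)) Filter.atTop Filter.atTop :=
    (tendsto_rpow_atTop (by linarith)).comp tendsto_natCast_atTop_atTop
  obtain ⟨N, hN⟩ := Filter.eventually_atTop.mp (htend.eventually_gt_atTop 14)
  obtain ⟨q, hqs, hqN⟩ := hinf.exists_gt N
  obtain ⟨hq0, he1, he2⟩ := hqs
  have hq14 : 14 < (q:ℝ)^(lam-1) := hN q (le_of_lt hqN)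
  set δ : ℝ := (q:ℝ)^(-lam) with hδ
  have hqR : (1:ℝ) ≤ (q:ℝ) := by exact_mod_cast hq0
  have hqpos : (0:ℝ) < q := by linarith
  have hδpos : 0 < δ := Real.rpow_pos_of_pos hqpos _
  have hδ1 : δ ≤ 1 := Real.rpow_le_one_of_one_le_of_nonpos hqR (by linarith)
  set p₁ : ℤ := round ((q:ℝ) * x₁) with hp₁
  set p₂ : ℤ := round ((q:ℝ) * x₂) with hp₂
  set ε₁ : ℝ := (q:ℝ) * x₁ - (p₁:ℝ) with hε₁
  set ε₂ : ℝ := (q:ℝ) * x₂ - (p₂:ℝ) with hε₂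
  have he1' : |ε₁| < δ := he1
  have he2' : |ε₂| < δ := he2
  have hb1 : |(q:ℝ) * x₁| ≤ 2 * q := by
    rw [abs_mul, abs_of_nonneg (le_of_lt hqpos)]; nlinarith
  have hb2 : |(q:ℝ) * x₂| ≤ 2 * q := by
    rw [abs_mul, abs_of_nonneg (le_of_lt hqpos)]; nlinarith
  -- the integer D
  have hD : ((p₁^2 + p₂^2 - 3*(q:ℤ)^2 : ℤ) : ℝ)
      = ε₁^2 + ε₂^2 - 2*((q:ℝ)*x₁) * ε₁ - 2*((q:ℝ)*x₂) * ε₂ := by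
    have h1 : (p₁:ℝ) = (q:ℝ)*x₁ - ε₁ := by rw [hε₁]; ring
    have h2 : (p₂:ℝ) = (q:ℝ)*x₂ - ε₂ := by rw [hε₂]; ring
    push_cast
    rw [h1, h2]
    linear_combination (q:ℝ)^2 * hx
  clear_value δ p₁ p₂ ε₁ ε₂
  -- bound |D| < 1
  have habs : |((p₁^2 + p₂^2 - 3*(q:ℤ)^2 : ℤ) : ℝ)| < 10 * (q * δ) := by
    rw [hD]
    have hA : |ε₁^2 + ε₂^2| ≤ |ε₁| ^ 2 + |ε₂| ^ 2 := by
      calc |ε₁^2 + ε₂^2| ≤ |ε₁^2| + |ε₂^2| := abs_add_le _ _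
        _ = |ε₁| ^ 2 + |ε₂| ^ 2 := by rw [abs_pow, abs_pow]
    have hB : |2*((q:ℝ)*x₁) * ε₁| = 2 * |(q:ℝ) * x₁| * |ε₁| := by
      rw [abs_mul, abs_mul, abs_two]
    have hC : |2*((q:ℝ)*x₂) * ε₂| = 2 * |(q:ℝ) * x₂| * |ε₂| := by
      rw [abs_mul, abs_mul, abs_two]
    have t1 : |ε₁^2 + ε₂^2 - 2*((q:ℝ)*x₁) * ε₁ - 2*((q:ℝ)*x₂) * ε₂|
        ≤ |ε₁| ^ 2 + |ε₂| ^ 2 + 2 * |(q:ℝ) * x₁| * |ε₁| + 2 * |(q:ℝ) * x₂| * |ε₂| := by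
      calc |ε₁^2 + ε₂^2 - 2*((q:ℝ)*x₁) * ε₁ - 2*((q:ℝ)*x₂) * ε₂|
          ≤ |ε₁^2 + ε₂^2 - 2*((q:ℝ)*x₁) * ε₁| + |2*((q:ℝ)*x₂) * ε₂| := abs_sub _ _
        _ ≤ |ε₁^2 + ε₂^2| + |2*((q:ℝ)*x₁) * ε₁| + |2*((q:ℝ)*x₂) * ε₂| := by
            have := abs_sub (ε₁^2 + ε₂^2) (2*((q:ℝ)*x₁) * ε₁)
            linarith
        _ ≤ |ε₁| ^ 2 + |ε₂| ^ 2 + 2 * |(q:ℝ) * x₁| * |ε₁| + 2 * |(q:ℝ) * x₂| * |ε₂| := by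
            rw [hB, hC]; linarith
    have hsq1 : |ε₁| ^ 2 < δ ^ 2 := by
      apply pow_lt_pow_left₀ he1' (abs_nonneg ε₁) (by norm_num)
    have hsq2 : |ε₂| ^ 2 < δ ^ 2 := by
      apply pow_lt_pow_left₀ he2' (abs_nonneg ε₂) (by norm_num)
    have hδq : δ ^ 2 ≤ δ * ((q:ℝ) * δ) := by
      rw [pow_two]
      exact mul_le_mul_of_nonneg_left (le_mul_of_one_le_left hδpos.le hqR) hδpos.le
    have b1 : |ε₁| ^ 2 < δ * ((q:ℝ) * δ) := hsq1.trans_le hδq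
    have b2 : |ε₂| ^ 2 < δ * ((q:ℝ) * δ) := hsq2.trans_le hδq
    have b3 : 2 * |(q:ℝ) * x₁| * |ε₁| ≤ 4 * ((q:ℝ) * δ) := by
      calc 2 * |(q:ℝ) * x₁| * |ε₁| ≤ 2 * (2 * (q:ℝ)) * δ := by
            apply mul_le_mul (mul_le_mul_of_nonneg_left hb1 (by norm_num)) he1'.le
              (abs_nonneg _) (by positivity)
        _ = 4 * ((q:ℝ) * δ) := by ring
    have b4 : 2 * |(q:ℝ) * x₂| * |ε₂| ≤ 4 * ((q:ℝ) * δ) := by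
      calc 2 * |(q:ℝ) * x₂| * |ε₂| ≤ 2 * (2 * (q:ℝ)) * δ := by
            apply mul_le_mul (mul_le_mul_of_nonneg_left hb2 (by norm_num)) he2'.le
              (abs_nonneg _) (by positivity)
        _ = 4 * ((q:ℝ) * δ) := by ring
    have hqδpos : 0 < (q:ℝ) * δ := mul_pos hqpos hδpos
    have hqδ : δ * ((q:ℝ) * δ) ≤ 1 * ((q:ℝ) * δ) :=
      mul_le_mul_of_nonneg_right hδ1 hqδpos.le
    linarith
  have hqd : (q:ℝ) * δ = ((q:ℝ)^(lam-1))⁻¹ := by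
    have h2 : ((q:ℝ)^(lam-1))⁻¹ = (q:ℝ)^(1-lam) := by
      rw [← Real.rpow_neg hqpos.le]; ring_nf
    rw [h2, show (1:ℝ)-lam = 1 + (-lam) by ring, Real.rpow_add hqpos, Real.rpow_one, hδ]
  have hsmall : 10 * ((q:ℝ) * δ) < 1 := by
    rw [hqd]
    have h14 : ((q:ℝ)^(lam-1))⁻¹ < 14⁻¹ := by
      apply inv_strictAnti₀ (by norm_num) hq14
    calc 10 * ((q:ℝ)^(lam-1))⁻¹ < 10 * 14⁻¹ := by linarith
      _ < 1 := by norm_num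
  have hDlt : |((p₁^2 + p₂^2 - 3*(q:ℤ)^2 : ℤ) : ℝ)| < 1 := lt_trans habs hsmall
  have hDz : p₁^2 + p₂^2 - 3*(q:ℤ)^2 = 0 := by
    have h1 : ((|p₁^2 + p₂^2 - 3*(q:ℤ)^2| : ℤ) : ℝ) < 1 := by
      rw [Int.cast_abs]; exact hDlt
    have h2 : |p₁^2 + p₂^2 - 3*(q:ℤ)^2| < 1 := by exact_mod_cast h1
    exact Int.abs_lt_one_iff.mp h2
  have : q = 0 := descent3 q p₁ p₂ (by linarith [hDz])
  omega
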